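/- The Yorioka ideal I_id (for the identity function id on ω) is contained in HDZ: every A ∈ I_id has Hausdorff dimension 0. -/

import Mathlib

open Set
open scoped ENNReal
open MeasureTheory

/-- The Cantor space `2^ω = ℕ → Bool` carries the metric
`d(x,y) = 2^{-min{n : x n ≠ y n}}` (and `d(x,x) = 0`). -/
noncomputable local instance cantorMetric : MetricSpace (ℕ → Bool) := PiNat.metricSpace

/-- `s` is an initial segment of `x : 2^ω`. -/
def InitSeg (s : List Bool) (x : ℕ → Bool) : Prop :=
  ∀ i : ℕ, (hi : i < s.length) → s.get ⟨i, hi⟩ = x i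

/-- `[σ]_∞` : the set of `x ∈ 2^ω` having `σ n` as an initial segment for infinitely
many `n`. -/
def limsupCyl (σ : ℕ → List Bool) : Set (ℕ → Bool) :=
  {x | ∃ᶠ n in Filter.atTop, InitSeg (σ n) x}

/-- The ideal `J_g = {A ⊆ 2^ω : ∃ σ, ht σ = g and A ⊆ [σ]_∞}`. -/
def Jg (g : ℕ → ℕ) : Set (Set (ℕ → Bool)) :=
  {A | ∃ σ : ℕ → List Bool, (∀ n, (σ n).length = g n) ∧ A ⊆ limsupCyl σ}

/-- `f ≪ g` iff for every `k`, `f (n^k) ≤ g n` for all but finitely many `n`. -/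
def FastBelow (f g : ℕ → ℕ) : Prop := ∀ k : ℕ, ∀ᶠ n in Filter.atTop, f (n ^ k) ≤ g n

/-- The Yorioka ideal `I_f = ⋃_{g ≫ f} J_g`. -/
def Yorioka (f : ℕ → ℕ) : Set (Set (ℕ → Bool)) :=
  {A | ∃ g : ℕ → ℕ, FastBelow f g ∧ A ∈ Jg g}

lemma diam_initSeg (s : List Bool) :
    EMetric.diam {x : ℕ → Bool | InitSeg s x} ≤ (2⁻¹ : ℝ≥0∞) ^ s.length := by
  apply EMetric.diam_le
  intro x hx y hy
  have hd : dist y x ≤ (1 / 2 : ℝ) ^ s.length := by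
    refine PiNat.mem_cylinder_iff_dist_le.1 ?_
    intro i hi
    exact (hy i hi).symm.trans (hx i hi)
  rw [edist_dist, dist_comm]
  calc ENNReal.ofReal (dist y x) ≤ ENNReal.ofReal ((1/2 : ℝ) ^ s.length) :=
        ENNReal.ofReal_le_ofReal hd
    _ = (2⁻¹ : ℝ≥0∞) ^ s.length := by
        rw [ENNReal.ofReal_pow (by norm_num)]
        congr 1
        rw [one_div, ENNReal.ofReal_inv_of_pos two_pos, ENNReal.ofReal_ofNat]

/-- The Yorioka ideal `I_id` is contained in `HDZ`: every
`A ∈ I_id` has Hausdorff dimension `0`. -/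
theorem stmt14 : ∀ A ∈ Yorioka id, dimH A = 0 := by
  intro A hA
  obtain ⟨g, hg, σ, hlen, hsub⟩ := hA
  obtain ⟨N0, hN0⟩ := (hg 1).exists_forall_of_atTop
  simp only [id_eq, pow_one] at hN0
  have key : ∀ d : ℝ, 0 < d → μH[d] A = 0 := by
    intro d hd
    set w : ℝ≥0∞ := (2⁻¹ : ℝ≥0∞) ^ d with hw
    have hw1 : w < 1 := ENNReal.rpow_lt_one (by norm_num) hd
    have hwtop : (1 - w)⁻¹ ≠ ∞ := by
      simp [ENNReal.inv_ne_top, tsub_eq_zero_iff_le, not_le, hw1]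
    have hpow : ∀ m : ℕ, ((2⁻¹ : ℝ≥0∞) ^ m) ^ d = w ^ m := by
      intro m
      rw [← ENNReal.rpow_natCast (2⁻¹) m, ← ENNReal.rpow_mul, mul_comm,
        ENNReal.rpow_mul, ENNReal.rpow_natCast]
    -- the covering sets
    set t : ℕ → ℕ → Set (ℕ → Bool) := fun N n => {x | InitSeg (σ (max N N0 + n)) x} with ht
    have hdiam : ∀ N n, EMetric.diam (t N n) ≤ (2⁻¹ : ℝ≥0∞) ^ N := by
      intro N n
      refine le_trans (diam_initSeg _) ?_
      rw [hlen]
      refine pow_le_pow_of_le_one zero_le (by norm_num) ?_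
      calc N ≤ max N N0 + n := le_trans (le_max_left _ _) (Nat.le_add_right _ _)
        _ ≤ g (max N N0 + n) := hN0 _ (le_trans (le_max_right _ _) (Nat.le_add_right _ _))
    have hcov : ∀ N, A ⊆ ⋃ n, t N n := by
      intro N x hx
      obtain ⟨n, hI, hn⟩ :=
        ((hsub hx).and_eventually (Filter.eventually_ge_atTop (max N N0))).exists
      refine mem_iUnion.2 ⟨n - max N N0, ?_⟩
      show InitSeg (σ (max N N0 + (n - max N N0))) x
      rwa [Nat.add_sub_cancel' hn]
    have hle := MeasureTheory.Measure.hausdorffMeasure_le_liminf_tsum d A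
      (fun N : ℕ => (2⁻¹ : ℝ≥0∞) ^ N)
      (ENNReal.tendsto_pow_atTop_nhds_zero_of_lt_one (by norm_num))
      t (Filter.Eventually.of_forall fun N i => hdiam N i)
      (Filter.Eventually.of_forall hcov)
    have hsum : ∀ N : ℕ, (∑' n, EMetric.diam (t N n) ^ d) ≤ w ^ N * (1 - w)⁻¹ := by
      intro N
      calc (∑' n, EMetric.diam (t N n) ^ d)
          ≤ ∑' n, ((2⁻¹ : ℝ≥0∞) ^ (max N N0 + n)) ^ d := by
            refine ENNReal.tsum_le_tsum fun n => ENNReal.rpow_le_rpow ?_ hd.le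
            refine le_trans (diam_initSeg _) ?_
            rw [hlen]
            refine pow_le_pow_of_le_one zero_le (by norm_num) ?_
            exact hN0 _ (le_trans (le_max_right _ _) (Nat.le_add_right _ _))
        _ = ∑' n, w ^ (max N N0) * w ^ n := by
            refine tsum_congr fun n => ?_
            rw [hpow, pow_add]
        _ = w ^ (max N N0) * (1 - w)⁻¹ := by
            rw [ENNReal.tsum_mul_left, ENNReal.tsum_geometric]
        _ ≤ w ^ N * (1 - w)⁻¹ := by
            exact mul_le_mul_left
              (pow_le_pow_of_le_one zero_le hw1.le (le_max_left _ _)) _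
    have hlim : Filter.Tendsto (fun N : ℕ => w ^ N * (1 - w)⁻¹) Filter.atTop (nhds 0) := by
      have := ENNReal.Tendsto.mul_const (ENNReal.tendsto_pow_atTop_nhds_zero_of_lt_one hw1)
        (Or.inr hwtop)
      simpa using this
    have : μH[d] A ≤ 0 := by
      refine hle.trans ?_
      calc Filter.liminf (fun N => ∑' n, EMetric.diam (t N n) ^ d) Filter.atTop
          ≤ Filter.liminf (fun N : ℕ => w ^ N * (1 - w)⁻¹) Filter.atTop :=
            Filter.liminf_le_liminf (Filter.Eventually.of_forall hsum)
        _ = 0 := hlim.liminf_eq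
    exact le_antisymm this zero_le
  refine le_antisymm (dimH_le fun d' hd' => ?_) zero_le
  rcases eq_or_lt_of_le (zero_le : (0 : NNReal) ≤ d') with h | h
  · simp [← h]
  · exact absurd (key d' (by exact_mod_cast h)) (by simp [hd'])
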